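/- If U is a nonprincipal ultrafilter on ω that is 𝔠-OK and is not a P-point, then ⟨U, ⊇*⟩ is Tukey equivalent to ⟨[𝔠]^{<ω}, ⊆⟩. -/

import Mathlib

open Cardinal

/-- A subset `S` of a quasiorder `⟨α, r⟩` is bounded if it has an upper bound. -/
def TBounded {α : Type*} (r : α → α → Prop) (S : Set α) : Prop :=
  ∃ b, ∀ x ∈ S, r x b

/-- A subset `C` of `⟨α, r⟩` is cofinal if every element lies below a member of `C`. -/
def TCofinal {α : Type*} (r : α → α → Prop) (C : Set α) : Prop :=
  ∀ x, ∃ c ∈ C, r x c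

/-- A Tukey map: the image of every unbounded set is unbounded. -/
def IsTukeyMap {α β : Type*} (ra : α → α → Prop) (rb : β → β → Prop) (f : α → β) : Prop :=
  ∀ S : Set α, ¬ TBounded ra S → ¬ TBounded rb (f '' S)

/-- Tukey reducibility `P ≤_T Q`: there is a Tukey map from `P` to `Q`. -/
def TukeyLE {α β : Type*} (ra : α → α → Prop) (rb : β → β → Prop) : Prop :=
  ∃ f : α → β, IsTukeyMap ra rb f

/-- Tukey equivalence `P ≡_T Q`. -/
def TukeyEquiv {α β : Type*} (ra : α → α → Prop) (rb : β → β → Prop) : Prop :=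
  TukeyLE ra rb ∧ TukeyLE rb ra

/-- Strict Tukey reducibility `P <_T Q`. -/
def TukeyLT {α β : Type*} (ra : α → α → Prop) (rb : β → β → Prop) : Prop :=
  TukeyLE ra rb ∧ ¬ TukeyLE rb ra

/-- A directed set: a preorder in which every finite subset (in particular `∅` and pairs)
has an upper bound; equivalently, a nonempty directed preorder. -/
structure IsDirectedSet {α : Type*} (r : α → α → Prop) : Prop where
  nonempty : Nonempty α
  refl : ∀ x, r x x
  trans : ∀ {x y z}, r x y → r y z → r x z
  directed : ∀ x y, ∃ z, r x z ∧ r y z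

/-- `U` is a nonprincipal ultrafilter. -/
def Nonprincipal (U : Ultrafilter ℕ) : Prop := ∀ a : ℕ, U ≠ pure a

/-- `⟨U, ⊇⟩`: the members of `U` ordered by reverse inclusion (`A ≤ B` iff `A ⊇ B`). -/
def revIncl (U : Ultrafilter ℕ) : {A : Set ℕ // A ∈ U} → {A : Set ℕ // A ∈ U} → Prop :=
  fun A B => (B : Set ℕ) ⊆ (A : Set ℕ)

/-- `⟨U, ⊇*⟩`: the members of `U` preordered by reverse almost inclusion
(`A ≤ B` iff `A ⊇* B` iff `B \\ A` is finite). -/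
def revAlmostIncl (U : Ultrafilter ℕ) : {A : Set ℕ // A ∈ U} → {A : Set ℕ // A ∈ U} → Prop :=
  fun A B => ((B : Set ℕ) \ (A : Set ℕ)).Finite

/-- `U` is a P-point: every countable subset of `U` has a pseudointersection in `U`,
i.e. a member of `U` almost contained in every set of the subset. -/
def IsPPoint (U : Ultrafilter ℕ) : Prop :=
  ∀ S : Set (Set ℕ), S.Countable → (∀ A ∈ S, A ∈ U) →
    ∃ B ∈ U, ∀ A ∈ S, (B \ A).Finite

/-- `U` is `𝔠`-OK: for every sequence `⟨A_n⟩_{n<ω}` of members of `U` there is a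
`𝔠`-indexed family `⟨B_α⟩` of members of `U` with `⋂_{α ∈ σ} B_α ⊆* A_{|σ|}` for
every nonempty finite `σ`. -/
def IsContinuumOK (U : Ultrafilter ℕ) : Prop :=
  ∀ A : ℕ → Set ℕ, (∀ n, A n ∈ U) →
    ∃ B : Cardinal.continuum.{0}.ord.ToType → Set ℕ, (∀ α, B α ∈ U) ∧
      ∀ σ : Finset Cardinal.continuum.{0}.ord.ToType, σ.Nonempty →
        ((⋂ α ∈ σ, B α) \ A σ.card).Finite

/-- A `𝔠`-OK non-P-point satisfies `⟨U, ⊇*⟩ ≡_T ⟨[𝔠]^{<ω}, ⊆⟩`. -/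
theorem stmt12 (U : Ultrafilter ℕ) (hU : Nonprincipal U)
    (hok : IsContinuumOK U) (hnp : ¬ IsPPoint U) :
    ∀ C : Type, #C = Cardinal.continuum →
      TukeyEquiv (revAlmostIncl U) ((· ⊆ ·) : Finset C → Finset C → Prop) := by
  intro C hC
  constructor
  · -- `U ≤_T [𝔠]^{<ω}`
    have hle : #{A : Set ℕ // A ∈ U} ≤ #C := by
      rw [hC]
      calc #{A : Set ℕ // A ∈ U} ≤ #(Set ℕ) := Cardinal.mk_subtype_le _
        _ = Cardinal.continuum := by
            rw [Cardinal.mk_set, Cardinal.mk_nat, Cardinal.two_power_aleph0]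
    obtain ⟨g⟩ := (Cardinal.le_def _ _).mp hle
    refine ⟨fun A => {g A}, ?_⟩
    intro S hS hb
    apply hS
    obtain ⟨b, hbS⟩ := hb
    have hfin : S.Finite := by
      have hsub : S ⊆ g ⁻¹' (b : Set C) := by
        intro A hA
        have := hbS _ ⟨A, hA, rfl⟩
        simpa using this
      exact (b.finite_toSet.preimage g.injective.injOn).subset hsub
    refine ⟨⟨⋂ A ∈ S, (A : Set ℕ), (Filter.biInter_mem hfin).mpr (fun A _ => A.2)⟩, ?_⟩
    intro x hx
    show ((⋂ A ∈ S, (A : Set ℕ)) \ (x : Set ℕ)).Finite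
    have hsub : (⋂ A ∈ S, (A : Set ℕ)) ⊆ (x : Set ℕ) := Set.biInter_subset_of_mem hx
    rw [Set.diff_eq_empty.mpr hsub]
    exact Set.finite_empty
  · -- `[𝔠]^{<ω} ≤_T U`
    rw [IsPPoint] at hnp
    push_neg at hnp
    obtain ⟨S, hScnt, hSU, hSnp⟩ := hnp
    have hSne : S.Nonempty := by
      by_contra h
      rw [Set.not_nonempty_iff_eq_empty] at h
      obtain ⟨A0, hA0, -⟩ := hSnp Set.univ Filter.univ_mem
      simp [h] at hA0
    obtain ⟨e, he⟩ := hScnt.exists_eq_range hSne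
    set A : ℕ → Set ℕ := fun n => ⋂ k ∈ Finset.range (n+1), e k with hAdef
    have heU : ∀ k, e k ∈ U := fun k => hSU (e k) (he ▸ Set.mem_range_self k)
    have hAU : ∀ n, A n ∈ U := fun n =>
      (Filter.biInter_mem (Finset.range (n+1)).finite_toSet).mpr (fun k _ => heU k)
    have hAsub : ∀ k n, k ≤ n → A n ⊆ e k := by
      intro k n hk
      exact Set.biInter_subset_of_mem (Finset.mem_range.mpr (Nat.lt_succ_of_le hk))
    have hAanti : ∀ m n, m ≤ n → A n ⊆ A m := by
      intro m n hmn
      apply Set.subset_iInter₂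
      intro k hk
      exact hAsub k n (le_trans (by simpa [Finset.mem_range, Nat.lt_succ_iff] using hk) hmn)
    obtain ⟨B, hBU, hBok⟩ := hok A hAU
    have hCeq : #C = #(Cardinal.continuum.{0}.ord.ToType) := by
      rw [hC, Cardinal.mk_ord_toType]
    obtain ⟨eqv⟩ := Cardinal.eq.mp hCeq
    refine ⟨fun σ => ⟨⋂ α ∈ σ, B (eqv α),
      (Filter.biInter_mem σ.finite_toSet).mpr (fun α _ => hBU _)⟩, ?_⟩
    intro T hT hb
    apply hT
    obtain ⟨⟨D, hD⟩, hDb⟩ := hb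
    by_cases hW : (⋃ t ∈ T, (t : Set C)).Finite
    · exact ⟨hW.toFinset, fun t ht x hx =>
        hW.mem_toFinset.mpr (Set.mem_biUnion ht (Finset.mem_coe.mpr hx))⟩
    · exfalso
      have hWinf : (⋃ t ∈ T, (t : Set C)).Infinite := hW
      -- every `B (eqv α)` for `α` in the union almost contains `D`
      have key1 : ∀ α ∈ ⋃ t ∈ T, (t : Set C), (D \ B (eqv α)).Finite := by
        intro α hα
        obtain ⟨t, ht, hαt⟩ := Set.mem_iUnion₂.mp hα
        have h1 := hDb _ ⟨t, ht, rfl⟩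
        have h2 : (D \ ⋂ β ∈ t, B (eqv β)).Finite := h1
        refine h2.subset (Set.diff_subset_diff_right ?_)
        exact Set.biInter_subset_of_mem hαt
      have keyn : ∀ n, (D \ A (n + 1)).Finite := by
        intro n
        obtain ⟨τ, hτW, hτcard⟩ := hWinf.exists_subset_card_eq (n + 1)
        set σ : Finset (Cardinal.continuum.{0}.ord.ToType) := τ.image eqv with hσdef
        have hσcard : σ.card = n + 1 := by
          rw [hσdef, Finset.card_image_of_injective _ eqv.injective, hτcard]
        have hσne : σ.Nonempty := Finset.card_pos.mp (by omega)
        have h1 : ((⋂ β ∈ σ, B β) \ A (n + 1)).Finite := by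
          have := hBok σ hσne
          rwa [hσcard] at this
        have hBU2 : (⋃ β ∈ σ, D \ B β).Finite := by
          refine Set.Finite.biUnion σ.finite_toSet (fun β hβ => ?_)
          obtain ⟨α, hατ, rfl⟩ := Finset.mem_image.mp (hσdef ▸ hβ)
          exact key1 α (hτW hατ)
        have h2 : (D \ ⋂ β ∈ σ, B β).Finite := by
          refine hBU2.subset ?_
          · intro x hx
            obtain ⟨hxD, hxI⟩ := hx
            simp only [Set.mem_iInter] at hxI
            push_neg at hxI
            obtain ⟨β, hβ, hxβ⟩ := hxI
            exact Set.mem_biUnion hβ ⟨hxD, hxβ⟩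
        refine Set.Finite.subset (h2.union h1) ?_
        intro x hx
        by_cases hxI : x ∈ ⋂ β ∈ σ, B β
        · exact Or.inr ⟨hxI, hx.2⟩
        · exact Or.inl ⟨hx.1, hxI⟩
      have keyAll : ∀ n, (D \ A n).Finite := by
        intro n
        exact (keyn n).subset (Set.diff_subset_diff_right (hAanti n (n + 1) (Nat.le_succ n)))
      obtain ⟨X, hXS, hXinf⟩ := hSnp D hD
      obtain ⟨k, rfl⟩ := he ▸ hXS
      exact hXinf ((keyAll k).subset (Set.diff_subset_diff_right (hAsub k k le_rfl)))
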